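/- Let V be a finite-dimensional real vector space, R ⊆ V a subspace, and Ω a nondegenerate alternating bilinear form on R (if v ∈ R satisfies Ω(v,w) = 0 for all w ∈ R, then v = 0). Then there exists a unique alternating bilinear form π on V* (a bivector on V), with induced map π♯ : V* → V determined by β(π♯(α)) = π(α,β), such that π♯(V*) = R and Ω(π♯(α), π♯(β)) = π(β, α) for all α, β ∈ V*. -/

import Mathlib

/-- Given a subspace `R` of a finite-dimensional real vector space `V` and a
nondegenerate alternating bilinear form `Ω` on `R`, there is a unique bivector `π` on
`V` (alternating bilinear form on `V*`), with induced map `π♯ : V* → V` determined by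
`β(π♯(α)) = π(α,β)`, such that `π♯(V*) = R` and `Ω(π♯(α), π♯(β)) = π(β,α)`. -/
theorem unique_bivector_of_symplectic_subspace {V : Type*} [AddCommGroup V] [Module ℝ V]
    [FiniteDimensional ℝ V]
    (R : Submodule ℝ V)
    (Ω : ↥R →ₗ[ℝ] ↥R →ₗ[ℝ] ℝ)
    (hΩalt : ∀ v : ↥R, Ω v v = 0)
    (hΩnondeg : ∀ v : ↥R, (∀ w : ↥R, Ω v w = 0) → v = 0) :
    ∃! π : Module.Dual ℝ V →ₗ[ℝ] Module.Dual ℝ V →ₗ[ℝ] ℝ,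
      (∀ α : Module.Dual ℝ V, π α α = 0) ∧
      ∃ sharp : Module.Dual ℝ V →ₗ[ℝ] V,
        (∀ α β : Module.Dual ℝ V, β (sharp α) = π α β) ∧
        LinearMap.range sharp = R ∧
        ∀ (α β : Module.Dual ℝ V) (hα : sharp α ∈ R) (hβ : sharp β ∈ R),
          Ω ⟨sharp α, hα⟩ ⟨sharp β, hβ⟩ = π β α := by
  classical
  -- Ω as a map R → R* is bijective
  have hΩinj : Function.Injective Ω := by
    rw [injective_iff_map_eq_zero]
    intro v hv
    exact hΩnondeg v (fun w => by rw [hv]; rfl)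
  have hdim : Module.finrank ℝ ↥R = Module.finrank ℝ (Module.Dual ℝ ↥R) :=
    (Subspace.dual_finrank_eq).symm
  have hΩsurj : Function.Surjective Ω :=
    (LinearMap.injective_iff_surjective_of_finrank_eq_finrank hdim).mp hΩinj
  let e : ↥R ≃ₗ[ℝ] Module.Dual ℝ ↥R := LinearEquiv.ofBijective Ω ⟨hΩinj, hΩsurj⟩
  -- sharp : V* → V
  let sharp : Module.Dual ℝ V →ₗ[ℝ] V :=
    R.subtype ∘ₗ (e.symm : Module.Dual ℝ ↥R →ₗ[ℝ] ↥R) ∘ₗ R.dualRestrict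
  have hsharp_mem : ∀ α, sharp α ∈ R := fun α => (e.symm (R.dualRestrict α)).2
  have key : ∀ (α : Module.Dual ℝ V) (w : ↥R), Ω ⟨sharp α, hsharp_mem α⟩ w = α w := by
    intro α w
    have : Ω (e.symm (R.dualRestrict α)) w = (R.dualRestrict α) w := by
      have := e.apply_symm_apply (R.dualRestrict α)
      calc Ω (e.symm (R.dualRestrict α)) w = (e (e.symm (R.dualRestrict α))) w := rfl
        _ = (R.dualRestrict α) w := by rw [this]
    exact this
  -- define π
  let π : Module.Dual ℝ V →ₗ[ℝ] Module.Dual ℝ V →ₗ[ℝ] ℝ :=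
    (LinearMap.applyₗ (R := ℝ)).comp sharp
  have hπ : ∀ α β : Module.Dual ℝ V, β (sharp α) = π α β := fun _ _ => rfl
  refine ⟨π, ⟨?_, sharp, hπ, ?_, ?_⟩, ?_⟩
  · -- alternating
    intro α
    have := key α ⟨sharp α, hsharp_mem α⟩
    have h0 := hΩalt ⟨sharp α, hsharp_mem α⟩
    show α (sharp α) = 0
    rw [← this, h0]
  · -- range = R
    apply le_antisymm
    · rintro _ ⟨α, rfl⟩; exact hsharp_mem α
    · intro v hv
      obtain ⟨α, hα⟩ := (Subspace.dualRestrict_surjective (W := R)) (Ω ⟨v, hv⟩)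
      refine ⟨α, ?_⟩
      have : (⟨sharp α, hsharp_mem α⟩ : ↥R) = ⟨v, hv⟩ := by
        apply hΩinj
        ext w
        rw [key α w, ← hα]; rfl
      simpa using congrArg Subtype.val this
  · -- compatibility
    intro α β hα hβ
    have := key α ⟨sharp β, hβ⟩
    exact this
  · -- uniqueness
    rintro π' ⟨halt', sharp', hπ', hrange', hcomp'⟩
    have hsharp'mem : ∀ α, sharp' α ∈ R := by
      intro α; rw [← hrange']; exact ⟨α, rfl⟩
    -- sharp' = sharp
    have hss : ∀ α, sharp' α = sharp α := by
      intro α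
      have heq : (⟨sharp' α, hsharp'mem α⟩ : ↥R) = ⟨sharp α, hsharp_mem α⟩ := by
        apply hΩinj
        ext w
        rw [key α w]
        -- w ∈ R = range sharp', so w = sharp' γ
        obtain ⟨γ, hγ⟩ : (w : V) ∈ LinearMap.range sharp' := by rw [hrange']; exact w.2
        have : Ω (⟨sharp' α, hsharp'mem α⟩ : ↥R) w
            = Ω ⟨sharp' α, hsharp'mem α⟩ ⟨sharp' γ, hsharp'mem γ⟩ := by
          congr 1
          exact Subtype.ext hγ.symm
        rw [this, hcomp' α γ, ← hπ' γ α]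
        show α (sharp' γ) = α w
        rw [hγ]
      exact congrArg Subtype.val heq
    ext α β
    rw [← hπ' α β, ← hπ α β, hss α]
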